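/- Mechanism 3 is not strongly group strategyproof: for every even n ≥ 2 and every d > 0, there exist a location profile x ∈ ℝⁿ, a nonempty set S ⊆ {1,…,n}, and a misreport x'_S ∈ ℝ^{|S|} such that c(xᵢ, f₃(x'_S, x₋_S)) ≤ c(xᵢ, f₃(x)) for all i ∈ S and c(xⱼ, f₃(x'_S, x₋_S)) < c(xⱼ, f₃(x)) for some j ∈ S, where f₃ denotes Mechanism 3. -/
import Mathlib


open MeasureTheory

noncomputable section

/-- Shrink map: collapse interval [a,b] to the point a. -/
def shrink (a b t : ℝ) : ℝ :=
  if t ≤ a then t else if t ≤ b then a else t - (b - a)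

/-- Cost of an agent at ideal location `t` under range `(a,b)`. -/
def cost (t a b : ℝ) : ℝ := |shrink a b t - shrink a b 0|

/-- Social cost. -/
def SC (n : ℕ) (x : Fin n → ℝ) (a b : ℝ) : ℝ := ∑ i, cost (x i) a b

/-- Maximum cost. -/
def MC (n : ℕ) (x : Fin n → ℝ) (a b : ℝ) : ℝ :=
  sSup (Set.range fun i => cost (x i) a b)

/-- Optimal social cost over feasible ranges. -/
def OPTSC (n : ℕ) (d : ℝ) (x : Fin n → ℝ) : ℝ :=
  sInf {v : ℝ | ∃ a b : ℝ, a ≤ b ∧ b - a ≤ d ∧ v = SC n x a b}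

/-- Optimal maximum cost over feasible ranges. -/
def OPTMC (n : ℕ) (d : ℝ) (x : Fin n → ℝ) : ℝ :=
  sInf {v : ℝ | ∃ a b : ℝ, a ≤ b ∧ b - a ≤ d ∧ v = MC n x a b}

open Classical in
/-- The set D(x) used by Mechanism 1. -/
def Dset (n : ℕ) (d : ℝ) (x : Fin n → ℝ) : Set ℝ :=
  {y : ℝ | (Finset.univ.filter fun i => y + d ≤ x i).card ≤
           (Finset.univ.filter fun i => x i ≤ y).card}

/-- Mechanism 1. -/
def mech1 (n : ℕ) (d : ℝ) (x : Fin n → ℝ) : ℝ × ℝ :=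
  if 0 ≤ sInf (Dset n d x) then (0, d)
  else if sInf (Dset n d x) ≤ -d then (-d, 0)
  else (sInf (Dset n d x), sInf (Dset n d x) + d)

/-- Leftmost agent location. -/
def xleft (n : ℕ) (x : Fin n → ℝ) : ℝ := sInf (Set.range x)

/-- Rightmost agent location. -/
def xright (n : ℕ) (x : Fin n → ℝ) : ℝ := sSup (Set.range x)

/-- Mechanism 2. -/
def mech2 (n : ℕ) (d : ℝ) (x : Fin n → ℝ) : ℝ × ℝ :=
  if 0 ≤ xleft n x then (0, d)
  else if xleft n x ≤ -d then (-d, 0)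
  else (xleft n x, xleft n x + d)

/-- Mechanism 3. -/
def mech3 (n : ℕ) (d : ℝ) (x : Fin n → ℝ) : ℝ × ℝ :=
  (min (xleft n x) 0, min (xleft n x) 0 + d)

/-- The profile where agents in `S` report `x'` and all others report `x`. -/
def misreport (n : ℕ) (S : Finset (Fin n)) (x x' : Fin n → ℝ) : Fin n → ℝ :=
  fun j => if j ∈ S then x' j else x j

theorem stmt15 (n : ℕ) (hn : 2 ≤ n) (heven : Even n) (d : ℝ) (hd : 0 < d) :
    ∃ (x : Fin n → ℝ) (S : Finset (Fin n)) (x' : Fin n → ℝ), S.Nonempty ∧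
      (∀ i ∈ S,
        cost (x i) (mech3 n d (misreport n S x x')).1 (mech3 n d (misreport n S x x')).2 ≤
          cost (x i) (mech3 n d x).1 (mech3 n d x).2) ∧
      (∃ j ∈ S,
        cost (x j) (mech3 n d (misreport n S x x')).1 (mech3 n d (misreport n S x x')).2 <
          cost (x j) (mech3 n d x).1 (mech3 n d x).2) := by
  have hn0 : 0 < n := by omega
  have hn1 : 1 < n := by omega
  set i0 : Fin n := ⟨0, hn0⟩
  set i1 : Fin n := ⟨1, hn1⟩
  have hne : i0 ≠ i1 := by
    simp [i0, i1, Fin.ext_iff]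
  set x : Fin n → ℝ := fun i => if i = i1 then -d/2 else -3*d with hx
  set x' : Fin n → ℝ := fun _ => -d with hx'
  haveI : Nonempty (Fin n) := ⟨i0⟩
  have hm : misreport n Finset.univ x x' = fun _ => (-d : ℝ) := by
    funext j; simp [misreport, hx']
  have hxl' : xleft n (misreport n Finset.univ x x') = -d := by
    rw [hm, xleft]
    have : Set.range (fun _ : Fin n => (-d : ℝ)) = {-d} := Set.range_const
    rw [this, csInf_singleton]
  have hxl : xleft n x = -3*d := by
    rw [xleft]
    apply le_antisymm
    · apply csInf_le
      · refine ⟨-3*d, ?_⟩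
        rintro v ⟨i, rfl⟩
        by_cases h : i = i1 <;> simp [hx, h] <;> linarith
      · exact ⟨i0, by simp [hx, hne]⟩
    · apply le_csInf ⟨x i0, Set.mem_range_self _⟩
      rintro v ⟨i, rfl⟩
      by_cases h : i = i1 <;> simp [hx, h] <;> linarith
  have h1 : mech3 n d (misreport n Finset.univ x x') = (-d, -d + d) := by
    rw [mech3, hxl', min_eq_left (by linarith)]
  have h2 : mech3 n d x = (-3*d, -3*d + d) := by
    rw [mech3, hxl, min_eq_left (by linarith)]
  have hc1 : cost (-3*d) (-d) (-d + d) = 2*d := by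
    rw [cost, shrink, shrink]
    rw [if_pos (by linarith : -3*d ≤ -d), if_neg (by linarith : ¬ (0:ℝ) ≤ -d),
      if_pos (by linarith : (0:ℝ) ≤ -d + d)]
    rw [abs_eq (by linarith)]; right; ring
  have hc2 : cost (-3*d) (-3*d) (-3*d + d) = 2*d := by
    rw [cost, shrink, shrink]
    rw [if_pos (le_refl (-3*d)), if_neg (by linarith : ¬ (0:ℝ) ≤ -3*d),
      if_neg (by linarith : ¬ (0:ℝ) ≤ -3*d + d)]
    rw [abs_eq (by linarith)]; right; ring
  have hc3 : cost (-d/2) (-d) (-d + d) = 0 := by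
    rw [cost, shrink, shrink]
    rw [if_neg (by linarith : ¬ -d/2 ≤ -d), if_pos (by linarith : -d/2 ≤ -d + d),
      if_neg (by linarith : ¬ (0:ℝ) ≤ -d), if_pos (by linarith : (0:ℝ) ≤ -d + d)]
    simp
  have hc4 : cost (-d/2) (-3*d) (-3*d + d) = d/2 := by
    rw [cost, shrink, shrink]
    rw [if_neg (by linarith : ¬ -d/2 ≤ -3*d), if_neg (by linarith : ¬ -d/2 ≤ -3*d + d),
      if_neg (by linarith : ¬ (0:ℝ) ≤ -3*d), if_neg (by linarith : ¬ (0:ℝ) ≤ -3*d + d)]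
    rw [abs_eq (by linarith)]; right; ring
  refine ⟨x, Finset.univ, x', ⟨i0, Finset.mem_univ _⟩, ?_, ?_⟩
  · intro i _
    rw [h1, h2]
    by_cases h : i = i1
    · simp only [hx, h, if_pos rfl]
      rw [hc3, hc4]; linarith
    · simp only [hx, if_neg h]
      rw [hc1, hc2]
  · refine ⟨i1, Finset.mem_univ _, ?_⟩
    rw [h1, h2]
    simp only [hx, if_pos rfl]
    rw [hc3, hc4]; linarith
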